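/- For a countable graph G and f : V(G) → ω ∪ {ℵ₀} with f(x) ≤ d_E(x), if (G,f) satisfies a hereditary property P and (v_i)_{i<ω} is an enumeration of V(G) in which every vertex x with f(x) = ℵ₀ occurs infinitely often, then there exists an increasing sequence (F_k)_{k<ω} of finite f-factors such that P(G − F_k, f − d_{F_k}) holds for each k, d_{F_k}(v_k) = f(v_k) whenever f(v_k) < ℵ₀, and F_k \ F_{k−1} contains an edge at v_k whenever f(v_k) = ℵ₀; consequently F = ⋃_k F_k is a perfect f-factor. -/

import Mathlib

open Cardinal Set
open scoped Classical

namespace FFactor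

variable {V : Type}

/-- Degree of `x` with respect to an edge set `F`. -/
def deg (F : Set (Sym2 V)) (x : V) : Cardinal :=
  Cardinal.mk {e : Sym2 V // e ∈ F ∧ x ∈ e}

/-- `(G, f) ∈ C`: edges are genuine 2-element sets and `f x ≤ d_E x`. -/
def inC (E : Set (Sym2 V)) (f : V → Cardinal) : Prop :=
  (∀ e ∈ E, ¬ e.IsDiag) ∧ ∀ x, f x ≤ deg E x

/-- `F` is an `f`-factor of the graph with edge set `E`. -/
def IsFactor (E F : Set (Sym2 V)) (f : V → Cardinal) : Prop :=
  F ⊆ E ∧ ∀ x, deg F x ≤ f x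

/-- `F` is a perfect `f`-factor. -/
def IsPerfect (E F : Set (Sym2 V)) (f : V → Cardinal) : Prop :=
  F ⊆ E ∧ ∀ x, deg F x = f x

/-- The function `f_{x,y}`: decrease `f` by one at `x` and `y` when `1 ≤ f v < ℵ₀`. -/
noncomputable def fxy (f : V → Cardinal) (x y : V) : V → Cardinal := fun v =>
  if (v = x ∨ v = y) ∧ 1 ≤ f v ∧ f v < ℵ₀ then (((f v).toNat - 1 : ℕ) : Cardinal) else f v

/-- A property of pairs `(G, f)` (over arbitrary vertex types). -/
def GraphProp : Type 1 := ∀ (W : Type), Set (Sym2 W) → (W → Cardinal) → Prop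

/-- `P` is a hereditary property. (`P (G,f)` entails `(G,f) ∈ C`.) -/
def Hereditary (P : GraphProp) : Prop :=
  ∀ (W : Type) (E : Set (Sym2 W)) (f : W → Cardinal), P W E f →
    inC E f ∧ ∀ x : W, 0 < f x →
      ∃ y : W, 0 < f y ∧ s(x, y) ∈ E ∧ P W (E \ {s(x, y)}) (fxy f x y)

/-- `(G,f)` is an `α`-obstruction. -/
inductive IsObstruction : ∀ {W : Type}, Ordinal.{0} → Set (Sym2 W) → (W → Cardinal) → Prop
  | mk {W : Type} (α : Ordinal.{0}) (E : Set (Sym2 W)) (f : W → Cardinal) (x : W)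
      (β : W → Ordinal.{0}) (hx : 0 < f x)
      (h : ∀ y : W, s(x, y) ∈ E → 0 < f y →
        IsObstruction (β y) (E \ {s(x, y)}) (fxy f x y))
      (hα : α = ⨆ y : {y : W // s(x, y) ∈ E ∧ 0 < f y}, Order.succ (β y.1)) :
      IsObstruction α E f

/-- The property `P₂`. -/
def P2 : GraphProp := fun _ E f => inC E f ∧ ∀ α, ¬ IsObstruction α E f

/-- The property `P₁`. -/
def P1 : GraphProp := fun _ E f => inC E f ∧ ∃ F, IsPerfect E F f

/-- `(v_i)_{0 ≤ i < k}` is a trail (`k ≤ ω`, modelled as `k : ℕ∞`). -/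
def IsTrail (E : Set (Sym2 V)) (k : ℕ∞) (v : ℕ → V) : Prop :=
  1 ≤ k ∧
  (∀ i : ℕ, 0 < i → (i : ℕ∞) < k → s(v (i - 1), v i) ∈ E) ∧
  (∀ i j : ℕ, 0 < i → 0 < j → (i : ℕ∞) < k → (j : ℕ∞) < k → i ≠ j →
    s(v (i - 1), v i) ≠ s(v (j - 1), v j))

/-- `(v_i)_{0 ≤ i < k}` is an `F`-augmenting trail. -/
def IsAugTrail (E F : Set (Sym2 V)) (f : V → Cardinal) (k : ℕ∞) (v : ℕ → V) : Prop :=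
  IsTrail E k v ∧ 1 < k ∧
  (∀ i : ℕ, 0 < i → (i : ℕ∞) < k → (s(v (i - 1), v i) ∈ F ↔ Even i)) ∧
  deg F (v 0) < f (v 0) ∧
  (k = ⊤ ∨ ∃ n : ℕ, k = (n : ℕ∞) ∧ Even n ∧
    ((v 0 ≠ v (n - 1) ∧ deg F (v (n - 1)) < f (v (n - 1))) ∨
     (v 0 = v (n - 1) ∧ deg F (v (n - 1)) + 1 < f (v (n - 1)))))

/-- The property `P₄`. -/
def P4 : GraphProp := fun _ E f =>
  inC E f ∧ ∀ F, IsFactor E F f → ∀ x, deg F x < f x →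
    ∃ (k : ℕ∞) (v : _ → _), v 0 = x ∧ IsAugTrail E F f k v

/-- `C` is closed unbounded in `o`. -/
def IsClubIn (C : Set Ordinal) (o : Ordinal) : Prop :=
  C ⊆ Set.Iio o ∧
  (∀ a < o, ∃ b ∈ C, a ≤ b) ∧
  (∀ a < o, (C ∩ Set.Iio a).Nonempty → sSup (C ∩ Set.Iio a) = a → a ∈ C)

/-- `S` is stationary in `o`. -/
def IsStationaryIn (S : Set Ordinal) (o : Ordinal) : Prop :=
  ∀ C, IsClubIn C o → (S ∩ C).Nonempty

/-- `V_α = (V \ A) ∪ f⁻¹(c)`. -/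
def subV (f : V → Cardinal) (c : Cardinal) (A : Set V) : Set V :=
  Aᶜ ∪ {x | f x = c}

/-- `E_α = {{x,y} ∈ E : x ∈ V_α, y ∈ V \ A}`. -/
def subE (E : Set (Sym2 V)) (f : V → Cardinal) (c : Cardinal) (A : Set V) : Set (Sym2 V) :=
  {e ∈ E | ∃ x y, e = s(x, y) ∧ x ∈ subV f c A ∧ y ∉ A}

/-- The edge set of a graph induced on the vertex subset `S`. -/
def inducedE (S : Set V) (E' : Set (Sym2 V)) : Set (Sym2 ↥S) :=
  {e : Sym2 ↥S | e.map Subtype.val ∈ E'}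

/-- `(A_α)_{α < c.ord}` is a `P`-destruction of `(G, f)`, `c = κ⁺`. -/
def PDestruction (P : GraphProp) (E : Set (Sym2 V)) (f : V → Cardinal)
    (c : Cardinal) (A : Ordinal → Set V) : Prop :=
  (∀ α < c.ord, ∀ β, α ≤ β → β < c.ord → A α ⊆ A β) ∧
  (∀ α < c.ord, Cardinal.mk (A α) < c) ∧
  (∀ α < c.ord, Order.IsSuccLimit α → A α = ⋃ β : Set.Iio α, A β.1) ∧
  (⋃ α : Set.Iio c.ord, A α.1) = Set.univ ∧
  IsStationaryIn {α | α < c.ord ∧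
    ¬ P ↥(subV f c (A α)) (inducedE (subV f c (A α)) (subE E f c (A α)))
        (fun x => f x.1)} c.ord

/-- `(G, f)` is `P`-destructed. -/
def PDestructed (P : GraphProp) (E : Set (Sym2 V)) (f : V → Cardinal) (c : Cardinal) : Prop :=
  ∃ A : Ordinal → Set V, PDestruction P E f c A

/-- The function `f - d_F`, for `F` a finite factor (with `ℵ₀ - n = ℵ₀`). -/
noncomputable def fsub (f : V → Cardinal) (F : Set (Sym2 V)) : V → Cardinal := fun x =>
  if f x < ℵ₀ then (((f x).toNat - (deg F x).toNat : ℕ) : Cardinal) else f x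

/-- `F` is a `κ`-perfect `f`-factor of `(V, E)`. -/
def IsKPerfect (κ : Cardinal) (E F : Set (Sym2 V)) (f : V → Cardinal) : Prop :=
  IsFactor E F f ∧ (∀ x, f x ≤ κ → deg F x = f x) ∧ ∀ x, κ < f x → 0 < deg F x


/-! ### Auxiliary lemmas for Statement 18 -/

lemma deg_eq_mk_setOf (F : Set (Sym2 V)) (x : V) :
    deg F x = Cardinal.mk ↥{e : Sym2 V | e ∈ F ∧ x ∈ e} := rfl

lemma deg_mono {F F' : Set (Sym2 V)} (h : F ⊆ F') (x : V) : deg F x ≤ deg F' x :=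
  Cardinal.mk_le_mk_of_subset (fun e he => ⟨h he.1, he.2⟩)

lemma deg_lt_aleph0 {F : Set (Sym2 V)} (hF : F.Finite) (x : V) : deg F x < ℵ₀ :=
  Set.Finite.lt_aleph0 (hF.subset (fun _ he => he.1))

lemma deg_empty (x : V) : deg (∅ : Set (Sym2 V)) x = 0 := by
  rw [deg_eq_mk_setOf]
  simp

lemma deg_insert_mem {F : Set (Sym2 V)} {e : Sym2 V} (he : e ∉ F) {x : V} (hx : x ∈ e) :
    deg (insert e F) x = deg F x + 1 := by
  rw [deg_eq_mk_setOf, deg_eq_mk_setOf]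
  have hset : {a : Sym2 V | a ∈ insert e F ∧ x ∈ a} = insert e {a : Sym2 V | a ∈ F ∧ x ∈ a} := by
    ext a
    simp only [Set.mem_setOf_eq, Set.mem_insert_iff]
    constructor
    · rintro ⟨h1 | h1, h2⟩
      · exact Or.inl h1
      · exact Or.inr ⟨h1, h2⟩
    · rintro (rfl | ⟨h1, h2⟩)
      · exact ⟨Or.inl rfl, hx⟩
      · exact ⟨Or.inr h1, h2⟩
  rw [hset, Cardinal.mk_insert (fun h => he h.1)]

lemma deg_insert_not_mem {F : Set (Sym2 V)} {e : Sym2 V} {x : V} (hx : x ∉ e) :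
    deg (insert e F) x = deg F x := by
  rw [deg_eq_mk_setOf, deg_eq_mk_setOf]
  have hset : {a : Sym2 V | a ∈ insert e F ∧ x ∈ a} = {a : Sym2 V | a ∈ F ∧ x ∈ a} := by
    ext a
    simp only [Set.mem_setOf_eq, Set.mem_insert_iff]
    constructor
    · rintro ⟨rfl | h1, h2⟩
      · exact absurd h2 hx
      · exact ⟨h1, h2⟩
    · rintro ⟨h1, h2⟩
      exact ⟨Or.inr h1, h2⟩
  rw [hset]

lemma fsub_of_lt {f : V → Cardinal} {F : Set (Sym2 V)} {x : V} (h : f x < ℵ₀) :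
    fsub f F x = (((f x).toNat - (deg F x).toNat : ℕ) : Cardinal) := if_pos h

lemma fsub_of_not_lt {f : V → Cardinal} {F : Set (Sym2 V)} {x : V} (h : ¬ f x < ℵ₀) :
    fsub f F x = f x := if_neg h

lemma fsub_congr_deg {f : V → Cardinal} {F F' : Set (Sym2 V)} {x : V}
    (h : deg F x = deg F' x) : fsub f F x = fsub f F' x := by
  unfold fsub
  rw [h]

lemma fsub_empty (f : V → Cardinal) : fsub f (∅ : Set (Sym2 V)) = f := by
  funext x
  by_cases h : f x < ℵ₀
  · rw [fsub_of_lt h, deg_empty]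
    simp [Cardinal.cast_toNat_of_lt_aleph0 h]
  · exact fsub_of_not_lt h

/-- The invariant of the construction: `F` is a finite `f`-factor whose removal keeps `P`. -/
def GoodState (E : Set (Sym2 V)) (f : V → Cardinal) (P : GraphProp) (F : Set (Sym2 V)) : Prop :=
  F.Finite ∧ IsFactor E F f ∧ P V (E \ F) (fsub f F)

lemma good_empty {E : Set (Sym2 V)} {f : V → Cardinal} {P : GraphProp}
    (h : P V E f) : GoodState E f P (∅ : Set (Sym2 V)) := by
  refine ⟨Set.finite_empty, ⟨Set.empty_subset E, fun x => by rw [deg_empty]; exact zero_le⟩, ?_⟩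
  rw [Set.diff_empty, fsub_empty f]
  exact h

lemma step_lemma {E : Set (Sym2 V)} {f : V → Cardinal} {P : GraphProp}
    (hP : Hereditary P) (hf : ∀ z, f z ≤ ℵ₀) {F : Set (Sym2 V)} (hG : GoodState E f P F)
    {x : V} (hx : 0 < fsub f F x) :
    ∃ e, e ∉ F ∧ x ∈ e ∧ GoodState E f P (insert e F) := by
  obtain ⟨hFin, hFac, hp⟩ := hG
  obtain ⟨hC', hext⟩ := hP V (E \ F) (fsub f F) hp
  obtain ⟨y, hy, hxy, hp'⟩ := hext x hx
  have hne : x ≠ y := fun hxy' => hC'.1 _ hxy (by rw [Sym2.mk_isDiag_iff]; exact hxy')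
  -- key degree bound at the endpoints
  have key : ∀ z : V, 0 < fsub f F z → deg F z + 1 ≤ f z := by
    intro z hz
    by_cases hfz : f z < ℵ₀
    · have hdz : deg F z < ℵ₀ := deg_lt_aleph0 hFin z
      rw [fsub_of_lt hfz] at hz
      have hz' : 0 < (f z).toNat - (deg F z).toNat := by exact_mod_cast hz
      have hlt : (deg F z).toNat + 1 ≤ (f z).toNat := by omega
      calc deg F z + 1 = (((deg F z).toNat + 1 : ℕ) : Cardinal) := by
            rw [← Cardinal.cast_toNat_of_lt_aleph0 hdz]
            push_cast
            ring
        _ ≤ (((f z).toNat : ℕ) : Cardinal) := by exact_mod_cast hlt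
        _ = f z := Cardinal.cast_toNat_of_lt_aleph0 hfz
    · have hfz' : f z = ℵ₀ := le_antisymm (hf z) (not_lt.mp hfz)
      rw [hfz']
      have h1 : deg F z < ℵ₀ := deg_lt_aleph0 hFin z
      have : deg F z + 1 < ℵ₀ := Cardinal.add_lt_aleph0 h1 Cardinal.one_lt_aleph0
      exact this.le
  have hxE : s(x, y) ∈ E := hxy.1
  have hxF : s(x, y) ∉ F := hxy.2
  refine ⟨s(x, y), hxF, Sym2.mem_mk_left x y, hFin.insert _,
    ⟨Set.insert_subset hxE hFac.1, ?_⟩, ?_⟩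
  · -- degree bound
    intro z
    by_cases hz : z ∈ s(x, y)
    · rw [deg_insert_mem hxF hz]
      rcases Sym2.mem_iff.mp hz with rfl | rfl
      · exact key z hx
      · exact key z hy
    · rw [deg_insert_not_mem hz]
      exact hFac.2 z
  · -- the property P is preserved
    have hE : (E \ F) \ {s(x, y)} = E \ insert (s(x, y)) F := by
      rw [Set.diff_diff, Set.union_singleton]
    have hfeq : fxy (fsub f F) x y = fsub f (insert (s(x, y)) F) := by
      funext z
      by_cases hz : z = x ∨ z = y
      · have hzmem : z ∈ s(x, y) := Sym2.mem_iff.mpr hz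
        have h0 : 0 < fsub f F z := by rcases hz with rfl | rfl; exacts [hx, hy]
        by_cases hfz : f z < ℵ₀
        · have hdz : deg F z < ℵ₀ := deg_lt_aleph0 hFin z
          have hle : 1 ≤ fsub f F z := Cardinal.one_le_iff_pos.mpr h0
          have hlt : fsub f F z < ℵ₀ := by
            rw [fsub_of_lt hfz]; exact Cardinal.nat_lt_aleph0 _
          have hd1 : (deg F z + 1).toNat = (deg F z).toNat + 1 := by
            rw [Cardinal.toNat_add hdz Cardinal.one_lt_aleph0]
            simp
          show (if (z = x ∨ z = y) ∧ 1 ≤ fsub f F z ∧ fsub f F z < ℵ₀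
            then (((fsub f F z).toNat - 1 : ℕ) : Cardinal) else fsub f F z) = _
          rw [if_pos ⟨hz, hle, hlt⟩, fsub_of_lt (F := insert (s(x, y)) F) hfz,
            deg_insert_mem hxF hzmem, fsub_of_lt (F := F) hfz, Cardinal.toNat_natCast, hd1,
            Nat.cast_inj]
          omega
        · have hfz' : fsub f F z = f z := fsub_of_not_lt hfz
          show (if (z = x ∨ z = y) ∧ 1 ≤ fsub f F z ∧ fsub f F z < ℵ₀
            then (((fsub f F z).toNat - 1 : ℕ) : Cardinal) else fsub f F z) = _
          rw [if_neg (fun hcond => hfz (hfz' ▸ hcond.2.2)), hfz',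
            fsub_of_not_lt (F := insert (s(x, y)) F) hfz]
      · have hzmem : z ∉ s(x, y) := fun hmem => hz (Sym2.mem_iff.mp hmem)
        show (if (z = x ∨ z = y) ∧ 1 ≤ fsub f F z ∧ fsub f F z < ℵ₀
          then (((fsub f F z).toNat - 1 : ℕ) : Cardinal) else fsub f F z) = _
        rw [if_neg (fun hcond => hz hcond.1)]
        exact fsub_congr_deg (deg_insert_not_mem hzmem).symm
    rw [hE, hfeq] at hp'
    exact hp'

lemma iterate_lemma {E : Set (Sym2 V)} {f : V → Cardinal} {P : GraphProp}
    (hP : Hereditary P) (hf : ∀ z, f z ≤ ℵ₀) :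
    ∀ (n : ℕ) (F : Set (Sym2 V)), GoodState E f P F → ∀ x : V, f x < ℵ₀ →
      (fsub f F x).toNat = n → ∃ F', F ⊆ F' ∧ GoodState E f P F' ∧ deg F' x = f x := by
  intro n
  induction n with
  | zero =>
    intro F hG x hfx h0
    refine ⟨F, subset_rfl, hG, ?_⟩
    have hd : deg F x < ℵ₀ := deg_lt_aleph0 hG.1 x
    have hle : deg F x ≤ f x := hG.2.1.2 x
    rw [fsub_of_lt hfx, Cardinal.toNat_natCast] at h0
    have hdm : (deg F x).toNat = (f x).toNat := by
      have := Cardinal.toNat_le_toNat hle hfx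
      omega
    calc deg F x = ((deg F x).toNat : Cardinal) := (Cardinal.cast_toNat_of_lt_aleph0 hd).symm
      _ = ((f x).toNat : Cardinal) := by rw [hdm]
      _ = f x := Cardinal.cast_toNat_of_lt_aleph0 hfx
  | succ n ih =>
    intro F hG x hfx hn
    have hd : deg F x < ℵ₀ := deg_lt_aleph0 hG.1 x
    rw [fsub_of_lt hfx, Cardinal.toNat_natCast] at hn
    have hpos : 0 < fsub f F x := by
      rw [fsub_of_lt hfx, hn]
      exact_mod_cast Nat.succ_pos n
    obtain ⟨e, heF, hxe, hG'⟩ := step_lemma hP hf hG hpos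
    have hnext : (fsub f (insert e F) x).toNat = n := by
      rw [fsub_of_lt hfx, deg_insert_mem heF hxe, Cardinal.toNat_natCast,
        Cardinal.toNat_add hd Cardinal.one_lt_aleph0]
      simp only [map_one]
      omega
    obtain ⟨F', hsub, hG'', hdeg⟩ := ih (insert e F) hG' x hfx hnext
    exact ⟨F', (Set.subset_insert e F).trans hsub, hG'', hdeg⟩

lemma main_step {E : Set (Sym2 V)} {f : V → Cardinal} {P : GraphProp}
    (hP : Hereditary P) (hf : ∀ z, f z ≤ ℵ₀) (F : Set (Sym2 V)) (hG : GoodState E f P F)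
    (x : V) :
    ∃ F', F ⊆ F' ∧ GoodState E f P F' ∧ (f x < ℵ₀ → deg F' x = f x) ∧
      (f x = ℵ₀ → ∃ e ∈ F', x ∈ e ∧ e ∉ F) := by
  by_cases hfx : f x < ℵ₀
  · obtain ⟨F', h1, h2, h3⟩ := iterate_lemma hP hf _ F hG x hfx rfl
    exact ⟨F', h1, h2, fun _ => h3, fun hx => absurd (hx ▸ hfx) (lt_irrefl _)⟩
  · have hfx' : f x = ℵ₀ := le_antisymm (hf x) (not_lt.mp hfx)
    have hpos : 0 < fsub f F x := by
      rw [fsub_of_not_lt hfx, hfx']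
      exact Cardinal.aleph0_pos
    obtain ⟨e, he, hxe, hG'⟩ := step_lemma hP hf hG hpos
    exact ⟨insert e F, Set.subset_insert e F, hG', fun hlt => absurd hlt hfx,
      fun _ => ⟨e, Set.mem_insert e F, hxe, he⟩⟩

/-- the construction in the proof of Theorem 1. -/
theorem statement_18 (V : Type) (E : Set (Sym2 V)) (f : V → Cardinal)
    (hC : inC E f) (hV : Cardinal.mk V = ℵ₀) (hf : ∀ x, f x ≤ ℵ₀)
    (P : GraphProp) (hP : Hereditary P) (h : P V E f)
    (v : ℕ → V) (hsurj : Function.Surjective v)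
    (hinf : ∀ x : V, f x = ℵ₀ → {i : ℕ | v i = x}.Infinite) :
    ∃ F : ℕ → Set (Sym2 V),
      (∀ k l : ℕ, k ≤ l → F k ⊆ F l) ∧
      (∀ k, (F k).Finite ∧ IsFactor E (F k) f) ∧
      (∀ k, P V (E \ F k) (fsub f (F k))) ∧
      (∀ k, f (v k) < ℵ₀ → deg (F k) (v k) = f (v k)) ∧
      (∀ k, f (v k) = ℵ₀ → ∃ e ∈ F k, v k ∈ e ∧ (k = 0 ∨ e ∉ F (k - 1))) ∧
      IsPerfect E (⋃ k, F k) f := by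
  have countV : Countable V := Cardinal.mk_le_aleph0_iff.mp (le_of_eq hV)
  have hstep : ∀ F : Set (Sym2 V), GoodState E f P F → ∀ x : V,
      ∃ F', F ⊆ F' ∧ GoodState E f P F' ∧ (f x < ℵ₀ → deg F' x = f x) ∧
        (f x = ℵ₀ → ∃ e ∈ F', x ∈ e ∧ e ∉ F) := fun F hG x => main_step hP hf F hG x
  choose g hg1 hg2 hg3 hg4 using hstep
  let seq : ℕ → {F : Set (Sym2 V) // GoodState E f P F} :=
    fun n => Nat.rec (motive := fun _ => {F : Set (Sym2 V) // GoodState E f P F})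
      ⟨g ∅ (good_empty h) (v 0), hg2 _ _ _⟩
      (fun k prev => ⟨g prev.1 prev.2 (v (k + 1)), hg2 _ _ _⟩) n
  set F : ℕ → Set (Sym2 V) := fun k => (seq k).1 with hFdef
  have hGood : ∀ k, GoodState E f P (F k) := fun k => (seq k).2
  have hsucc : ∀ k, F k ⊆ F (k + 1) := fun k => hg1 (seq k).1 (seq k).2 (v (k + 1))
  have hmono : ∀ k l : ℕ, k ≤ l → F k ⊆ F l := by
    intro k l hkl
    induction l with
    | zero =>
      have : k = 0 := Nat.le_zero.mp hkl
      rw [this]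
    | succ l ih =>
      rcases Nat.eq_or_lt_of_le hkl with rfl | hlt
      · exact subset_rfl
      · exact (ih (Nat.lt_succ_iff.mp hlt)).trans (hsucc l)
  have hdeg : ∀ k, f (v k) < ℵ₀ → deg (F k) (v k) = f (v k) := by
    intro k
    cases k with
    | zero => exact hg3 ∅ (good_empty h) (v 0)
    | succ k => exact hg3 (seq k).1 (seq k).2 (v (k + 1))
  have hnew : ∀ k, f (v k) = ℵ₀ → ∃ e ∈ F k, v k ∈ e ∧ (k = 0 ∨ e ∉ F (k - 1)) := by
    intro k hk
    cases k with
    | zero =>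
      obtain ⟨e, he, hxe, _⟩ := hg4 ∅ (good_empty h) (v 0) hk
      exact ⟨e, he, hxe, Or.inl rfl⟩
    | succ k =>
      obtain ⟨e, he, hxe, hne⟩ := hg4 (seq k).1 (seq k).2 (v (k + 1)) hk
      exact ⟨e, he, hxe, Or.inr hne⟩
  refine ⟨F, hmono, fun k => ⟨(hGood k).1, (hGood k).2.1⟩, fun k => (hGood k).2.2,
    hdeg, hnew, Set.iUnion_subset fun k => (hGood k).2.1.1, ?_⟩
  intro x
  apply le_antisymm
  · -- deg (⋃ k, F k) x ≤ f x
    by_cases hfx : f x < ℵ₀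
    · by_contra hlt
      push_neg at hlt
      set n := (f x).toNat with hn
      have hfxn : f x = (n : Cardinal) := (Cardinal.cast_toNat_of_lt_aleph0 hfx).symm
      have hsucc' : ((n + 1 : ℕ) : Cardinal) ≤ deg (⋃ k, F k) x := by
        rw [Cardinal.nat_succ]
        exact Order.succ_le_of_lt (hfxn ▸ hlt)
      rw [← Cardinal.mk_fin (n + 1)] at hsucc'
      obtain ⟨φ⟩ := (Cardinal.le_def _ _).mp hsucc'
      have hex : ∀ i : Fin (n + 1), ∃ k, (φ i).1 ∈ F k := fun i =>
        Set.mem_iUnion.mp (φ i).2.1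
      choose κ hκ using hex
      set K := Finset.univ.sup κ with hK
      have hmem : ∀ i, (φ i).1 ∈ F K := fun i =>
        hmono (κ i) K (Finset.le_sup (Finset.mem_univ i)) (hκ i)
      have hinj : Function.Injective
          (fun i : Fin (n + 1) => (⟨(φ i).1, hmem i, (φ i).2.2⟩ :
            {e : Sym2 V // e ∈ F K ∧ x ∈ e})) := by
        intro i j hij
        simp only [Subtype.mk.injEq] at hij
        exact φ.injective (Subtype.ext hij)
      have hle : ((n + 1 : ℕ) : Cardinal) ≤ deg (F K) x := by
        rw [← Cardinal.mk_fin (n + 1)]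
        exact Cardinal.mk_le_of_injective hinj
      have hle' : deg (F K) x ≤ f x := (hGood K).2.1.2 x
      rw [hfxn] at hle'
      have : (n + 1 : ℕ) ≤ n := by exact_mod_cast hle.trans hle'
      omega
    · have hfx' : f x = ℵ₀ := le_antisymm (hf x) (not_lt.mp hfx)
      rw [hfx']
      exact Cardinal.mk_le_aleph0
  · -- f x ≤ deg (⋃ k, F k) x
    obtain ⟨k, rfl⟩ := hsurj x
    by_cases hfx : f (v k) < ℵ₀
    · rw [← hdeg k hfx]
      exact deg_mono (Set.subset_iUnion F k) (v k)
    · have hfx' : f (v k) = ℵ₀ := le_antisymm (hf _) (not_lt.mp hfx)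
      set x := v k with hx
      have hI : {i : ℕ | v i = x}.Infinite := hinf x hfx'
      have hchoice : ∀ i : {i : ℕ // v i = x},
          ∃ e, e ∈ F i.1 ∧ x ∈ e ∧ (i.1 = 0 ∨ e ∉ F (i.1 - 1)) := by
        intro i
        obtain ⟨e, he, hxe, hor⟩ := hnew i.1 (by rw [i.2]; exact hfx')
        exact ⟨e, he, i.2 ▸ hxe, hor⟩
      choose ε hε1 hε2 hε3 using hchoice
      have hinj : Function.Injective
          (fun i : {i : ℕ // v i = x} => (⟨ε i, Set.mem_iUnion.mpr ⟨i.1, hε1 i⟩, hε2 i⟩ :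
            {e : Sym2 V // e ∈ (⋃ k, F k) ∧ x ∈ e})) := by
        intro i j hij
        have hval : ε i = ε j := by simpa only [Subtype.mk.injEq] using hij
        by_contra hne
        have hne' : i.1 ≠ j.1 := fun hh => hne (Subtype.ext hh)
        rcases Nat.lt_or_ge i.1 j.1 with hlt | hge
        · rcases hε3 j with h0 | hnin
          · omega
          · exact hnin (by rw [← hval]; exact hmono i.1 (j.1 - 1) (by omega) (hε1 i))
        · have hlt : j.1 < i.1 := by omega
          rcases hε3 i with h0 | hnin
          · omega
          · exact hnin (by rw [hval]; exact hmono j.1 (i.1 - 1) (by omega) (hε1 j))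
      have hinfI : Infinite {i : ℕ // v i = x} := by
        rw [← Set.infinite_coe_iff] at hI
        exact hI
      calc f x = ℵ₀ := hfx'
        _ ≤ Cardinal.mk {i : ℕ // v i = x} := Cardinal.aleph0_le_mk _
        _ ≤ deg (⋃ k, F k) x := Cardinal.mk_le_of_injective hinj

end FFactor
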